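/- Let Γ be a convex lattice polygon whose adjoint Γ' is nonempty, and suppose there exists a direction h₀ that is tight for Γ and of minimal width for Γ' (width_{Γ'}(h₀) = v(Γ')). Then the set of optimal directions of Γ equals the set of directions h that are of minimal width for Γ' and tight for Γ, and v(Γ) = v(Γ') + 2. -/

import Mathlib

noncomputable section

/-- `p` is a lattice point of `ℤ² ⊂ ℝ²`. -/
def IsLat (p : ℝ × ℝ) : Prop := (∃ m : ℤ, p.1 = m) ∧ (∃ n : ℤ, p.2 = n)

/-- evaluation of the integral linear functional `h` at a point `p`. -/
def ev (h : ℤ × ℤ) (p : ℝ × ℝ) : ℝ := (h.1 : ℝ) * p.1 + (h.2 : ℝ) * p.2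

/-- the maximum of `h` on `Γ`. -/
def maxW (Γ : Set (ℝ × ℝ)) (h : ℤ × ℤ) : ℝ := sSup (ev h '' Γ)

/-- the minimum of `h` on `Γ`. -/
def minW (Γ : Set (ℝ × ℝ)) (h : ℤ × ℤ) : ℝ := sInf (ev h '' Γ)

/-- the width of `Γ` in direction `h`. -/
def width (Γ : Set (ℝ × ℝ)) (h : ℤ × ℤ) : ℝ := maxW Γ h - minW Γ h

/-- the adjoint polygon: convex hull of the interior lattice points of `Γ`. -/
def adjoint (Γ : Set (ℝ × ℝ)) : Set (ℝ × ℝ) :=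
  convexHull ℝ {p | p ∈ interior Γ ∧ IsLat p}

/-- `h` is tight for `Γ` (max-tight and min-tight with respect to the adjoint). -/
def Tight (Γ : Set (ℝ × ℝ)) (h : ℤ × ℤ) : Prop :=
  maxW Γ h = maxW (adjoint Γ) h + 1 ∧ minW Γ h = minW (adjoint Γ) h - 1

/-- the lattice width of `Γ`: minimal width over nonzero integral directions. -/
def latticeWidth (Γ : Set (ℝ × ℝ)) : ℝ := sInf (width Γ '' {h : ℤ × ℤ | h ≠ 0})

/-- a primitive integral direction. -/
def IsPrimitive (h : ℤ × ℤ) : Prop := Int.gcd h.1 h.2 = 1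

/-- the set of optimal (minimal width) nonzero directions of `Γ`. -/
def optimalSet (Γ : Set (ℝ × ℝ)) : Set (ℤ × ℤ) :=
  {h | h ≠ 0 ∧ width Γ h = latticeWidth Γ}



lemma ev_add_smul (h : ℤ × ℤ) (p : ℝ × ℝ) (δ : ℝ) (u : ℝ × ℝ) :
    ev h (p + δ • u) = ev h p + δ * ((h.1 : ℝ) * u.1 + (h.2 : ℝ) * u.2) := by
  simp [ev]; ring

lemma ev_comb (h : ℤ × ℤ) (a b : ℝ) (x y : ℝ × ℝ) :
    ev h (a • x + b • y) = a * ev h x + b * ev h y := by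
  simp [ev]; ring

lemma convex_ev_le (h : ℤ × ℤ) (c : ℝ) : Convex ℝ {x | ev h x ≤ c} := by
  intro x hx y hy a b ha hb hab
  simp only [Set.mem_setOf_eq] at *
  rw [ev_comb]
  calc a * ev h x + b * ev h y ≤ a * c + b * c :=
        add_le_add (mul_le_mul_of_nonneg_left hx ha) (mul_le_mul_of_nonneg_left hy hb)
    _ = c := by rw [← add_mul, hab, one_mul]

lemma convex_ev_ge (h : ℤ × ℤ) (c : ℝ) : Convex ℝ {x | c ≤ ev h x} := by
  intro x hx y hy a b ha hb hab
  simp only [Set.mem_setOf_eq] at *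
  rw [ev_comb]
  calc (c : ℝ) = a * c + b * c := by rw [← add_mul, hab, one_mul]
    _ ≤ a * ev h x + b * ev h y :=
        add_le_add (mul_le_mul_of_nonneg_left hx ha) (mul_le_mul_of_nonneg_left hy hb)

lemma isLat_ev_int (h : ℤ × ℤ) (p : ℝ × ℝ) (hp : IsLat p) : ∃ m : ℤ, ev h p = m := by
  obtain ⟨⟨m, hm⟩, ⟨n, hn⟩⟩ := hp
  exact ⟨h.1 * m + h.2 * n, by rw [ev, hm, hn]; push_cast; ring⟩

lemma sSup_hull_le {A : Set (ℝ × ℝ)} (hA : A.Nonempty) (h : ℤ × ℤ) {c : ℝ}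
    (hb : ∀ s ∈ A, ev h s ≤ c) : sSup (ev h '' convexHull ℝ A) ≤ c := by
  apply csSup_le ((hA.mono (subset_convexHull ℝ A)).image _)
  rintro x ⟨y, hy, rfl⟩
  exact convexHull_min hb (convex_ev_le h c) hy

lemma le_sInf_hull {A : Set (ℝ × ℝ)} (hA : A.Nonempty) (h : ℤ × ℤ) {c : ℝ}
    (hb : ∀ s ∈ A, c ≤ ev h s) : c ≤ sInf (ev h '' convexHull ℝ A) := by
  apply le_csInf ((hA.mono (subset_convexHull ℝ A)).image _)
  rintro x ⟨y, hy, rfl⟩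
  exact convexHull_min hb (convex_ev_ge h c) hy

lemma dir_pos {h : ℤ × ℤ} (hh : h ≠ 0) :
    0 < (h.1 : ℝ) * (h.1 : ℝ) + (h.2 : ℝ) * (h.2 : ℝ) := by
  have h12 : h.1 ≠ 0 ∨ h.2 ≠ 0 := by
    by_contra hc; push_neg at hc; exact hh (Prod.ext hc.1 hc.2)
  rcases h12 with h1 | h1
  · have h1' : (h.1 : ℝ) ≠ 0 := Int.cast_ne_zero.mpr h1
    nlinarith [sq_nonneg (h.2 : ℝ), sq_abs (h.1 : ℝ), abs_pos.mpr h1']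
  · have h1' : (h.2 : ℝ) ≠ 0 := Int.cast_ne_zero.mpr h1
    nlinarith [sq_nonneg (h.1 : ℝ), sq_abs (h.2 : ℝ), abs_pos.mpr h1']

lemma ev_lt_sSup_of_interior (Γ : Set (ℝ × ℝ)) {h : ℤ × ℤ} (hh : h ≠ 0)
    (hb : BddAbove (ev h '' Γ)) {p : ℝ × ℝ} (hp : p ∈ interior Γ) :
    ev h p < sSup (ev h '' Γ) := by
  obtain ⟨ε, hε, hball⟩ := Metric.mem_nhds_iff.mp (mem_interior_iff_mem_nhds.mp hp)
  set u : ℝ × ℝ := ((h.1 : ℝ), (h.2 : ℝ)) with hu_def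
  have hc : 0 < (h.1 : ℝ) * u.1 + (h.2 : ℝ) * u.2 := dir_pos hh
  have hu : u ≠ 0 := by
    intro h0
    rw [h0] at hc; simp at hc
  have hun : 0 < ‖u‖ := norm_pos_iff.mpr hu
  set δ : ℝ := ε / (2 * ‖u‖) with hδ_def
  have hδ : 0 < δ := by positivity
  have hq : p + δ • u ∈ Γ := by
    apply hball
    rw [Metric.mem_ball, dist_eq_norm, add_sub_cancel_left, norm_smul, Real.norm_eq_abs,
      abs_of_pos hδ, hδ_def]
    rw [div_mul_eq_mul_div, mul_comm]
    rw [div_lt_iff₀ (by positivity)]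
    nlinarith
  have h1 : ev h (p + δ • u) ≤ sSup (ev h '' Γ) := le_csSup hb ⟨_, hq, rfl⟩
  have h2 := ev_add_smul h p δ u
  nlinarith

lemma sInf_lt_ev_of_interior (Γ : Set (ℝ × ℝ)) {h : ℤ × ℤ} (hh : h ≠ 0)
    (hb : BddBelow (ev h '' Γ)) {p : ℝ × ℝ} (hp : p ∈ interior Γ) :
    sInf (ev h '' Γ) < ev h p := by
  obtain ⟨ε, hε, hball⟩ := Metric.mem_nhds_iff.mp (mem_interior_iff_mem_nhds.mp hp)
  set u : ℝ × ℝ := ((h.1 : ℝ), (h.2 : ℝ)) with hu_def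
  have hc : 0 < (h.1 : ℝ) * u.1 + (h.2 : ℝ) * u.2 := dir_pos hh
  have hu : u ≠ 0 := by
    intro h0
    rw [h0] at hc; simp at hc
  have hun : 0 < ‖u‖ := norm_pos_iff.mpr hu
  set δ : ℝ := ε / (2 * ‖u‖) with hδ_def
  have hδ : 0 < δ := by positivity
  have hq : p + (-δ) • u ∈ Γ := by
    apply hball
    rw [Metric.mem_ball, dist_eq_norm, add_sub_cancel_left, norm_smul, Real.norm_eq_abs,
      abs_neg, abs_of_pos hδ, hδ_def]
    rw [div_mul_eq_mul_div, mul_comm]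
    rw [div_lt_iff₀ (by positivity)]
    nlinarith
  have h1 : sInf (ev h '' Γ) ≤ ev h (p + (-δ) • u) := csInf_le hb ⟨_, hq, rfl⟩
  have h2 := ev_add_smul h p (-δ) u
  nlinarith


/-- if some direction is simultaneously tight for `Γ` and optimal for the
adjoint `Γ'`, then the optimal directions of `Γ` are exactly the directions optimal for
`Γ'` and tight for `Γ`, and `v(Γ) = v(Γ') + 2`. -/
theorem stmt_8 (S : Set (ℝ × ℝ)) (hfin : S.Finite) (hne : S.Nonempty)
    (hlat : ∀ p ∈ S, IsLat p)
    (Γ : Set (ℝ × ℝ)) (hΓ : Γ = convexHull ℝ S)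
    (hint : {p | p ∈ interior Γ ∧ IsLat p}.Nonempty)
    (h₀ : ℤ × ℤ) (hh₀ : h₀ ≠ 0)
    (ht₀ : Tight Γ h₀)
    (hopt₀ : width (adjoint Γ) h₀ = latticeWidth (adjoint Γ)) :
    optimalSet Γ =
      {h : ℤ × ℤ | h ≠ 0 ∧ width (adjoint Γ) h = latticeWidth (adjoint Γ) ∧ Tight Γ h} ∧
    latticeWidth Γ = latticeWidth (adjoint Γ) + 2 := by
  have hΓcvx : Convex ℝ Γ := hΓ ▸ convex_convexHull ℝ S
  have hΓc : IsCompact Γ := hΓ ▸ hfin.isCompact_convexHull (𝕜 := ℝ)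
  have hΓne : Γ.Nonempty := hΓ ▸ hne.mono (subset_convexHull ℝ S)
  have hev : ∀ h : ℤ × ℤ, Continuous (ev h) := fun h => by unfold ev; fun_prop
  have hbA : ∀ h : ℤ × ℤ, BddAbove (ev h '' Γ) := fun h => (hΓc.image (hev h)).bddAbove
  have hbB : ∀ h : ℤ × ℤ, BddBelow (ev h '' Γ) := fun h => (hΓc.image (hev h)).bddBelow
  have hΓ'ne : (adjoint Γ).Nonempty := hint.mono (subset_convexHull ℝ _)
  have hΓ'sub : adjoint Γ ⊆ Γ :=
    convexHull_min (fun p hp => interior_subset hp.1) hΓcvx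
  have hbA' : ∀ h : ℤ × ℤ, BddAbove (ev h '' adjoint Γ) :=
    fun h => (hbA h).mono (Set.image_mono hΓ'sub)
  have hbB' : ∀ h : ℤ × ℤ, BddBelow (ev h '' adjoint Γ) :=
    fun h => (hbB h).mono (Set.image_mono hΓ'sub)
  -- maxW and minW of Γ are integers
  have hmaxint : ∀ h : ℤ × ℤ, ∃ m : ℤ, maxW Γ h = m := by
    intro h
    have h1 : maxW Γ h = sSup (ev h '' S) := by
      rw [maxW, hΓ]
      refine le_antisymm ?_ ?_
      · exact sSup_hull_le hne h (fun s hs => le_csSup (hfin.image _).bddAbove ⟨s, hs, rfl⟩)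
      · exact csSup_le_csSup (hΓ ▸ hbA h) (hne.image _) (Set.image_mono (subset_convexHull ℝ S))
    obtain ⟨x, hx, hxe⟩ := (hne.image (ev h)).csSup_mem (hfin.image _)
    obtain ⟨m, hm⟩ := isLat_ev_int h x (hlat x hx)
    exact ⟨m, by rw [h1, ← hxe, hm]⟩
  have hminint : ∀ h : ℤ × ℤ, ∃ m : ℤ, minW Γ h = m := by
    intro h
    have h1 : minW Γ h = sInf (ev h '' S) := by
      rw [minW, hΓ]
      refine le_antisymm ?_ ?_
      · exact csInf_le_csInf (hΓ ▸ hbB h) (hne.image _) (Set.image_mono (subset_convexHull ℝ S))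
      · exact le_sInf_hull hne h (fun s hs => csInf_le (hfin.image _).bddBelow ⟨s, hs, rfl⟩)
    obtain ⟨x, hx, hxe⟩ := (hne.image (ev h)).csInf_mem (hfin.image _)
    obtain ⟨m, hm⟩ := isLat_ev_int h x (hlat x hx)
    exact ⟨m, by rw [h1, ← hxe, hm]⟩
  -- key inequalities
  have fact3 : ∀ h : ℤ × ℤ, h ≠ 0 → maxW (adjoint Γ) h ≤ maxW Γ h - 1 := by
    intro h hh
    obtain ⟨m, hm⟩ := hmaxint h
    rw [maxW, adjoint]
    apply sSup_hull_le hint h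
    intro p hp
    obtain ⟨a, ha⟩ := isLat_ev_int h p hp.2
    have hlt : ev h p < maxW Γ h := ev_lt_sSup_of_interior Γ hh (hbA h) hp.1
    rw [ha, hm] at hlt ⊢
    have : a + 1 ≤ m := by exact_mod_cast hlt
    have : (a : ℝ) + 1 ≤ m := by exact_mod_cast this
    linarith
  have fact4 : ∀ h : ℤ × ℤ, h ≠ 0 → minW Γ h + 1 ≤ minW (adjoint Γ) h := by
    intro h hh
    obtain ⟨m, hm⟩ := hminint h
    rw [hm, minW, adjoint]
    apply le_sInf_hull hint h
    intro p hp
    obtain ⟨a, ha⟩ := isLat_ev_int h p hp.2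
    have hlt : minW Γ h < ev h p := sInf_lt_ev_of_interior Γ hh (hbB h) hp.1
    rw [ha, hm] at hlt
    have h2 : m + 1 ≤ a := by exact_mod_cast hlt
    have h3 : (m : ℝ) + 1 ≤ a := by exact_mod_cast h2
    rw [ha]
    exact h3
  -- widths of the adjoint are nonnegative
  have w'0 : ∀ h : ℤ × ℤ, 0 ≤ width (adjoint Γ) h := by
    intro h
    obtain ⟨x, hx⟩ := hΓ'ne
    have h1 : minW (adjoint Γ) h ≤ ev h x := csInf_le (hbB' h) ⟨x, hx, rfl⟩
    have h2 : ev h x ≤ maxW (adjoint Γ) h := le_csSup (hbA' h) ⟨x, hx, rfl⟩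
    rw [width]; linarith
  have hL'le : ∀ h : ℤ × ℤ, h ≠ 0 → latticeWidth (adjoint Γ) ≤ width (adjoint Γ) h := by
    intro h hh
    have hmem : width (adjoint Γ) h ∈ width (adjoint Γ) '' {h : ℤ × ℤ | h ≠ 0} := ⟨h, hh, rfl⟩
    have hbdd : BddBelow (width (adjoint Γ) '' {h : ℤ × ℤ | h ≠ 0}) :=
      ⟨0, by rintro x ⟨h', _, rfl⟩; exact w'0 h'⟩
    rw [latticeWidth]
    exact csInf_le hbdd hmem
  have tw : ∀ h : ℤ × ℤ, Tight Γ h → width Γ h = width (adjoint Γ) h + 2 := by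
    rintro h ⟨ha, hb⟩
    rw [width, width, ha, hb]; ring
  set W : ℝ := latticeWidth (adjoint Γ) + 2 with hW_def
  have key : ∀ h : ℤ × ℤ, h ≠ 0 → W ≤ width Γ h := by
    intro h hh
    have f3 := fact3 h hh
    have f4 := fact4 h hh
    have f5 := hL'le h hh
    rw [width] at *
    rw [hW_def]
    linarith
  have h₀w : width Γ h₀ = W := by rw [tw h₀ ht₀, hopt₀]
  have hLW : latticeWidth Γ = W := by
    rw [latticeWidth]
    refine le_antisymm ?_ ?_
    · have hmem : W ∈ width Γ '' {h : ℤ × ℤ | h ≠ 0} := ⟨h₀, hh₀, h₀w⟩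
      have hbdd : BddBelow (width Γ '' {h : ℤ × ℤ | h ≠ 0}) :=
        ⟨W, by rintro x ⟨h, hh, rfl⟩; exact key h hh⟩
      exact csInf_le hbdd hmem
    · have hnem : (width Γ '' {h : ℤ × ℤ | h ≠ 0}).Nonempty := ⟨_, h₀, hh₀, rfl⟩
      exact le_csInf hnem (by rintro x ⟨h, hh, rfl⟩; exact key h hh)
  refine ⟨?_, hLW⟩
  ext h
  simp only [optimalSet, Set.mem_setOf_eq, hLW]
  constructor
  · rintro ⟨hh, hw⟩
    have f3 := fact3 h hh
    have f4 := fact4 h hh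
    have f5 := hL'le h hh
    rw [hW_def] at hw
    rw [width] at hw
    have hw' : width (adjoint Γ) h = latticeWidth (adjoint Γ) := by
      rw [width]; rw [width] at f5; linarith
    refine ⟨hh, hw', ?_, ?_⟩
    · rw [width] at hw'; linarith
    · rw [width] at hw'; linarith
  · rintro ⟨hh, hw', ht⟩
    exact ⟨hh, by rw [tw h ht, hw', hW_def]⟩
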